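/- Under the list-experiment model with misreporting (Assumptions 1 and 2), the mean of the observed treatment-group responses satisfies E(Y₁) = ((1−p₁)/(1−p₀))·(E(Y₀) + δ·(1−p₀) − J·p₀/2) + (J+1)·p₁/2, where E(Y₀) = ∑_{j=0}^{J} j·P₀(j) and E(Y₁) = ∑_{j=0}^{J+1} j·P₁(j). -/

import Mathlib

theorem list_experiment_treatment_mean
    (J : ℕ) (hJ : 1 ≤ J)
    (P : ℤ → ℝ)
    (hPzero : ∀ j : ℤ, j < 0 ∨ (J : ℤ) < j → P j = 0)
    (hPnonneg : ∀ j : ℤ, 0 ≤ P j)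
    (hPsum : ∑ j ∈ Finset.Icc (0 : ℤ) (J : ℤ), P j = 1)
    (δ p₀ p₁ : ℝ)
    (hδ : 0 ≤ δ ∧ δ ≤ 1) (hp₀ : 0 ≤ p₀ ∧ p₀ < 1) (hp₁ : 0 ≤ p₁ ∧ p₁ < 1)
    (P₀ P₁ : ℤ → ℝ)
    (hP₀ : ∀ j : ℤ, 0 ≤ j → j ≤ (J : ℤ) →
      P₀ j = (1 - p₀) * P j + p₀ / ((J : ℝ) + 1))
    (hP₁ : ∀ j : ℤ, 0 ≤ j → j ≤ (J : ℤ) + 1 →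
      P₁ j = (1 - p₁) * (δ * P (j - 1) + (1 - δ) * P j) + p₁ / ((J : ℝ) + 2)) :
    ∑ j ∈ Finset.Icc (0 : ℤ) ((J : ℤ) + 1), (j : ℝ) * P₁ j =
      (1 - p₁) / (1 - p₀) *
          ((∑ j ∈ Finset.Icc (0 : ℤ) (J : ℤ), (j : ℝ) * P₀ j) +
            δ * (1 - p₀) - (J : ℝ) * p₀ / 2) +
        ((J : ℝ) + 1) * p₁ / 2 := by
  set S := ∑ j ∈ Finset.Icc (0 : ℤ) (J : ℤ), (j : ℝ) * P j with hS
  have h0 : P (-1) = 0 := hPzero _ (Or.inl (by norm_num))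
  have htop : ∀ (b : ℤ) (f : ℤ → ℝ), 0 ≤ b + 1 →
      ∑ j ∈ Finset.Icc (0:ℤ) (b+1), f j = (∑ j ∈ Finset.Icc (0:ℤ) b, f j) + f (b+1) := by
    intro b f hb
    have hins : Finset.Icc (0:ℤ) (b+1) = insert (b+1) (Finset.Icc 0 b) := by
      ext x; simp only [Finset.mem_Icc, Finset.mem_insert]; omega
    rw [hins, Finset.sum_insert (by simp)]
    ring
  have hgauss : ∀ n : ℕ, ∑ j ∈ Finset.Icc (0:ℤ) (n:ℤ), (j:ℝ) = (n:ℝ)*((n:ℝ)+1)/2 := by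
    intro n
    induction n with
    | zero => simp
    | succ k ih =>
      have hc : ((k+1:ℕ):ℤ) = (k:ℤ)+1 := by push_cast; ring
      rw [hc, htop (k:ℤ) _ (by positivity), ih]
      push_cast; ring
  -- shift lemma
  have hshift : ∑ j ∈ Finset.Icc (0:ℤ) ((J:ℤ)+1), (j:ℝ) * P (j-1)
      = ∑ j ∈ Finset.Icc (0:ℤ) (J:ℤ), ((j:ℝ)+1) * P j := by
    have hmap : Finset.Icc (0:ℤ) ((J:ℤ)+1)
        = Finset.map (addRightEmbedding 1) (Finset.Icc (-1) (J:ℤ)) := by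
      rw [Finset.map_add_right_Icc]; norm_num
    rw [hmap, Finset.sum_map]
    have hins : Finset.Icc (-1:ℤ) (J:ℤ) = insert (-1) (Finset.Icc 0 (J:ℤ)) := by
      ext x; simp only [Finset.mem_Icc, Finset.mem_insert]; omega
    rw [hins, Finset.sum_insert (by simp)]
    simp only [addRightEmbedding_apply]
    rw [show ((-1:ℤ)+1) = 0 by ring]
    simp only [Int.cast_zero, zero_mul, zero_add]
    apply Finset.sum_congr rfl
    intro x _
    have : x + 1 - 1 = x := by ring
    rw [this]; push_cast; ring
  have hPJ1 : P ((J:ℤ)+1) = 0 := hPzero _ (Or.inr (by omega))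
  -- sum of j*P j over 0..J+1 equals S
  have hSP : ∑ j ∈ Finset.Icc (0:ℤ) ((J:ℤ)+1), (j:ℝ) * P j = S := by
    rw [htop (J:ℤ) _ (by positivity), hPJ1]
    simp [hS]
  have hshift' : ∑ j ∈ Finset.Icc (0:ℤ) ((J:ℤ)+1), (j:ℝ) * P (j-1) = S + 1 := by
    rw [hshift]
    have : ∀ j ∈ Finset.Icc (0:ℤ) (J:ℤ), ((j:ℝ)+1) * P j = (j:ℝ) * P j + P j := by
      intro j _; ring
    rw [Finset.sum_congr rfl this, Finset.sum_add_distrib, hPsum, hS]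
  have hg1 : ∑ j ∈ Finset.Icc (0:ℤ) ((J:ℤ)+1), (j:ℝ) = ((J:ℝ)+1)*((J:ℝ)+2)/2 := by
    have := hgauss (J+1)
    push_cast at this
    rw [show ((J:ℤ)+1) = ((J+1:ℕ):ℤ) by push_cast; ring]
    push_cast
    rw [this]; ring
  have hg0 : ∑ j ∈ Finset.Icc (0:ℤ) ((J:ℤ)), (j:ℝ) = (J:ℝ)*((J:ℝ)+1)/2 := hgauss J
  have hL : ∑ j ∈ Finset.Icc (0:ℤ) ((J:ℤ)+1), (j:ℝ) * P₁ j
      = (1-p₁)*(δ*(S+1)+(1-δ)*S) + p₁/((J:ℝ)+2)*(((J:ℝ)+1)*((J:ℝ)+2)/2) := by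
    have : ∀ j ∈ Finset.Icc (0:ℤ) ((J:ℤ)+1), (j:ℝ) * P₁ j
        = (1-p₁)*δ*((j:ℝ)*P (j-1)) + (1-p₁)*(1-δ)*((j:ℝ)*P j) + p₁/((J:ℝ)+2)*(j:ℝ) := by
      intro j hj
      rw [Finset.mem_Icc] at hj
      rw [hP₁ j hj.1 hj.2]; ring
    rw [Finset.sum_congr rfl this, Finset.sum_add_distrib, Finset.sum_add_distrib,
      ← Finset.mul_sum, ← Finset.mul_sum, ← Finset.mul_sum, hshift', hSP, hg1]
    ring
  have hR : ∑ j ∈ Finset.Icc (0:ℤ) (J:ℤ), (j:ℝ) * P₀ j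
      = (1-p₀)*S + p₀/((J:ℝ)+1)*((J:ℝ)*((J:ℝ)+1)/2) := by
    have : ∀ j ∈ Finset.Icc (0:ℤ) (J:ℤ), (j:ℝ) * P₀ j
        = (1-p₀)*((j:ℝ)*P j) + p₀/((J:ℝ)+1)*(j:ℝ) := by
      intro j hj
      rw [Finset.mem_Icc] at hj
      rw [hP₀ j hj.1 hj.2]; ring
    rw [Finset.sum_congr rfl this, Finset.sum_add_distrib,
      ← Finset.mul_sum, ← Finset.mul_sum, hS, hg0]
  rw [hL, hR]
  have h1 : (1:ℝ) - p₀ ≠ 0 := by linarith [hp₀.2]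
  have h2 : (J:ℝ) + 1 ≠ 0 := by positivity
  have h3 : (J:ℝ) + 2 ≠ 0 := by positivity
  field_simp
  ring
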